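/- Let a and b be real numbers with 0 < a < b, and define Ψ : ℝ → ℝ by Ψ(t) = ((t−a)(t−b)/(a−b))·(2 − (t−a)(t−b)/(ab)). Then, with c = 2(a+b)²/((b−a)ab) and d = 12ab/(b−a), the function Ψ satisfies t²·Ψ''(t) − 6t·Ψ'(t) + 12·Ψ(t) = c·t² − d for every real t. -/

import Mathlib

/-- For 0 < a < b, the quartic Ψ(t) = ((t−a)(t−b)/(a−b))(2 − (t−a)(t−b)/(ab))
satisfies t²Ψ'' − 6tΨ' + 12Ψ = ct² − d with c = 2(a+b)²/((b−a)ab) and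
d = 12ab/(b−a). -/
theorem quartic_solves_ode (a b : ℝ) (ha : 0 < a) (hab : a < b)
    (Ψ : ℝ → ℝ)
    (hΨ : ∀ t : ℝ, Ψ t = ((t - a) * (t - b) / (a - b)) * (2 - (t - a) * (t - b) / (a * b))) :
    ∀ t : ℝ,
      t ^ 2 * deriv (deriv Ψ) t - 6 * t * deriv Ψ t + 12 * Ψ t
        = (2 * (a + b) ^ 2 / ((b - a) * (a * b))) * t ^ 2 - 12 * a * b / (b - a) := by
  have ha0 : a ≠ 0 := ne_of_gt ha
  have hb0 : b ≠ 0 := ne_of_gt (ha.trans hab)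
  have hab0 : a - b ≠ 0 := sub_ne_zero.mpr (ne_of_lt hab)
  have hba0 : b - a ≠ 0 := sub_ne_zero.mpr (ne_of_gt hab)
  have hΨ' : Ψ = fun t => 2/(a-b)*((t-a)*(t-b))
      - (1/((a-b)*(a*b)))*((t-a)*(t-b))^2 := by
    funext t
    rw [hΨ]
    field_simp
  have hp : ∀ t : ℝ, HasDerivAt (fun t => (t-a)*(t-b)) ((t-b)+(t-a)) t := by
    intro t
    have := (((hasDerivAt_id' t).sub_const a).mul ((hasDerivAt_id' t).sub_const b))
    exact this.congr_deriv (by ring)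
  have hd1 : ∀ t : ℝ, HasDerivAt Ψ
      (2/(a-b)*((t-b)+(t-a))
        - (1/((a-b)*(a*b)))*(2*((t-a)*(t-b))*((t-b)+(t-a)))) t := by
    intro t
    rw [hΨ']
    have h2 : HasDerivAt (fun t : ℝ => ((t-a)*(t-b))^2)
        (2*((t-a)*(t-b))*((t-b)+(t-a))) t := by
      have := (hp t).pow 2
      exact this.congr_deriv (by ring)
    exact ((hp t).const_mul _).sub (h2.const_mul _)
  have hderiv1 : deriv Ψ = fun t => 2/(a-b)*((t-b)+(t-a))
      - (1/((a-b)*(a*b)))*(2*((t-a)*(t-b))*((t-b)+(t-a))) := by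
    funext t; exact (hd1 t).deriv
  have hd2 : ∀ t : ℝ, HasDerivAt (deriv Ψ)
      (2/(a-b)*2 - (1/((a-b)*(a*b)))*(2*(((t-b)+(t-a))*((t-b)+(t-a)) + (t-a)*(t-b)*2))) t := by
    intro t
    rw [hderiv1]
    have hsum : HasDerivAt (fun t : ℝ => (t-b)+(t-a)) 2 t := by
      have := (((hasDerivAt_id t).sub_const b).add ((hasDerivAt_id t).sub_const a))
      exact this.congr_deriv (by norm_num)
    have h2 : HasDerivAt (fun t : ℝ => 2*((t-a)*(t-b))*((t-b)+(t-a)))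
        (2*(((t-b)+(t-a))*((t-b)+(t-a)) + (t-a)*(t-b)*2)) t := by
      have := (((hp t).const_mul 2).mul hsum)
      exact this.congr_deriv (by ring)
    exact ((hsum.const_mul _)).sub (h2.const_mul _)
  intro t
  rw [(hd2 t).deriv, hderiv1, hΨ]
  field_simp
  ring
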